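/- arXiv:math/0503681 — 3 statements merged into one kernel-verified Lean document; each statement's English description precedes it below -/
import Mathlib

section
/- Let (Ω, 𝔉, P) be a probability space and T: Ω → Ω a measure-preserving ergodic transformation. Let Θ ⊂ ℝᵖ, fix θ ∈ Θ and δ₀ > 0, and let f: Θ × Ω → ℝ be such that: (i) for each θ′ ∈ Θ, ω ↦ f(θ′, ω) is measurable; (ii) for P-a.e. ω, θ′ ↦ f(θ′, ω) is continuous on B̄(θ, δ₀) ∩ Θ; (iii) ω ↦ sup_{θ′∈B̄(θ,δ₀)∩Θ} |f(θ′, ω)| is P-integrable. Then for P-a.e. ω, lim_{δ↓0} limsup_{n→∞} sup_{θ′∈B̄(θ,δ)∩Θ} | n⁻¹ ∑_{k=1}ⁿ f(θ′, Tᵏω) − ∫_Ω f(θ, ·) dP | = 0. (This is the locally uniform law of large numbers of Lemma 15, used to prove Propositions 2, 4 and 5: Birkhoff averages of a parametrized stationary ergodic sequence converge locally uniformly in the parameter when the L¹ modulus of continuity vanishes.) -/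
set_option linter.unusedSectionVars false
set_option maxHeartbeats 2000000

open MeasureTheory Filter

section Birkhoff

variable {Ω : Type*} [MeasurableSpace Ω]

/-- Running maximum `max (0, S₁ g, ..., Sₙ g)` of Birkhoff sums, defined recursively. -/
noncomputable def maxBirk (T : Ω → Ω) (g : Ω → ℝ) : ℕ → Ω → ℝ
  | 0 => fun _ => 0
  | n + 1 => fun ω => max 0 (g ω + maxBirk T g n (T ω))

variable {T : Ω → Ω} {g : Ω → ℝ}

lemma maxBirk_nonneg (n : ℕ) (ω : Ω) : 0 ≤ maxBirk T g n ω := by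
  cases n with
  | zero => exact le_rfl
  | succ n => exact le_max_left _ _

lemma maxBirk_mono (n : ℕ) : ∀ ω : Ω, maxBirk T g n ω ≤ maxBirk T g (n + 1) ω := by
  induction n with
  | zero => intro ω; exact maxBirk_nonneg 1 ω
  | succ n ih =>
    intro ω
    exact max_le_max le_rfl (add_le_add le_rfl (ih (T ω)))

lemma birkhoffSum_le_maxBirk (n : ℕ) : ∀ (k : ℕ), k ≤ n → ∀ ω : Ω,
    birkhoffSum T g k ω ≤ maxBirk T g n ω := by
  induction n with
  | zero =>
    intro k hk ω
    interval_cases k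
    simp [birkhoffSum_zero, maxBirk]
  | succ n ih =>
    intro k hk ω
    cases k with
    | zero => simpa [birkhoffSum_zero] using maxBirk_nonneg (n+1) ω
    | succ k =>
      rw [birkhoffSum_succ']
      calc g ω + birkhoffSum T g k (T ω) ≤ g ω + maxBirk T g n (T ω) :=
            add_le_add le_rfl (ih k (Nat.succ_le_succ_iff.mp hk) (T ω))
        _ ≤ maxBirk T g (n + 1) ω := le_max_right _ _

lemma maxBirk_exists_eq (n : ℕ) : ∀ ω : Ω, ∃ k ≤ n, maxBirk T g n ω = birkhoffSum T g k ω := by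
  induction n with
  | zero => exact fun ω => ⟨0, le_rfl, (birkhoffSum_zero T g ω).symm⟩
  | succ n ih =>
    intro ω
    rcases le_or_gt (g ω + maxBirk T g n (T ω)) 0 with h | h
    · exact ⟨0, Nat.zero_le _, by simp [maxBirk, max_eq_left h, birkhoffSum_zero]⟩
    · obtain ⟨k, hk, hke⟩ := ih (T ω)
      refine ⟨k + 1, Nat.succ_le_succ hk, ?_⟩
      rw [birkhoffSum_succ', ← hke]
      exact max_eq_right h.le

lemma measurable_birkhoffSum (hTm : Measurable T) (hg : Measurable g) (n : ℕ) :
    Measurable (birkhoffSum T g n) :=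
  Finset.measurable_sum _ fun k _ => hg.comp (hTm.iterate k)

lemma measurable_maxBirk (hTm : Measurable T) (hg : Measurable g) (n : ℕ) :
    Measurable (maxBirk T g n) := by
  induction n with
  | zero => exact measurable_const
  | succ n ih => exact measurable_const.max (hg.add (ih.comp hTm))

lemma integrable_comp_mp {P : Measure Ω} (hT : MeasurePreserving T P P) {h : Ω → ℝ}
    (hm : Measurable h) (hi : Integrable h P) : Integrable (fun ω => h (T ω)) P := by
  have : Integrable h (P.map T) := by rw [hT.map_eq]; exact hi
  exact (integrable_map_measure hm.aestronglyMeasurable hT.measurable.aemeasurable).mp this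

lemma integrable_maxBirk {P : Measure Ω} [IsFiniteMeasure P] (hT : MeasurePreserving T P P)
    (hg : Measurable g) (hgi : Integrable g P) (n : ℕ) :
    Integrable (maxBirk T g n) P := by
  induction n with
  | zero => exact integrable_const 0
  | succ n ih =>
    have h1 : Integrable (fun ω => maxBirk T g n (T ω)) P :=
      integrable_comp_mp hT (measurable_maxBirk hT.measurable hg n) ih
    have h2 : Integrable (fun ω => g ω + maxBirk T g n (T ω)) P := hgi.add h1
    have := h2.pos_part
    simpa [maxBirk, max_comm] using this

/-- Garsia's maximal ergodic inequality. -/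
lemma maximal_ergodic {P : Measure Ω} [IsProbabilityMeasure P] (hT : MeasurePreserving T P P)
    (hg : Measurable g) (hgi : Integrable g P) (n : ℕ) :
    0 ≤ ∫ ω, Set.indicator {ω | 0 < maxBirk T g (n+1) ω} g ω ∂P := by
  set A := {ω | 0 < maxBirk T g (n+1) ω} with hAdef
  have hMm : Measurable (maxBirk T g (n+1)) := measurable_maxBirk hT.measurable hg (n+1)
  have hMi : Integrable (maxBirk T g (n+1)) P := integrable_maxBirk hT hg hgi (n+1)
  have hMTi : Integrable (fun ω => maxBirk T g (n+1) (T ω)) P := integrable_comp_mp hT hMm hMi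
  have key : ∀ ω, maxBirk T g (n+1) ω - maxBirk T g (n+1) (T ω) ≤ A.indicator g ω := by
    intro ω
    by_cases hω : ω ∈ A
    · rw [Set.indicator_of_mem hω]
      have h0 : (0:ℝ) < maxBirk T g (n+1) ω := hω
      have hx : maxBirk T g (n+1) ω = g ω + maxBirk T g n (T ω) := by
        rcases lt_max_iff.mp h0 with h | h
        · exact absurd h (lt_irrefl 0)
        · exact max_eq_right h.le
      have := maxBirk_mono (T := T) (g := g) n (T ω)
      linarith
    · rw [Set.indicator_of_notMem hω]
      have h0 : maxBirk T g (n+1) ω ≤ 0 := not_lt.mp hω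
      have h1 := maxBirk_nonneg (T := T) (g := g) (n+1) (T ω)
      linarith
  have hint : ∫ ω, maxBirk T g (n+1) (T ω) ∂P = ∫ ω, maxBirk T g (n+1) ω ∂P := by
    rw [← integral_map hT.measurable.aemeasurable hMm.aestronglyMeasurable, hT.map_eq]
  have hImono : ∫ ω, (maxBirk T g (n+1) ω - maxBirk T g (n+1) (T ω)) ∂P
      ≤ ∫ ω, A.indicator g ω ∂P := by
    refine integral_mono (hMi.sub hMTi) ?_ key
    exact hgi.indicator (hMm (measurableSet_Ioi (a := (0:ℝ))))
  rw [integral_sub hMi hMTi, hint, sub_self] at hImono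
  exact hImono

/-- Integral over an invariant set on which Birkhoff sums become positive is nonnegative. -/
lemma setIntegral_nonneg_invariant {P : Measure Ω} [IsProbabilityMeasure P]
    (hT : MeasurePreserving T P P) (hg : Measurable g) (hgi : Integrable g P)
    {A : Set Ω} (hA : MeasurableSet A) (hinv : T ⁻¹' A = A)
    (hsub : ∀ ω ∈ A, ∃ n, 0 < birkhoffSum T g (n+1) ω) :
    0 ≤ ∫ ω in A, g ω ∂P := by
  set h : Ω → ℝ := A.indicator g with hh
  have hm : Measurable h := hg.indicator hA
  have hi : Integrable h P := hgi.indicator hA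
  have mem_iff : ∀ ω, T ω ∈ A ↔ ω ∈ A := fun ω => by
    conv_rhs => rw [← hinv]
    rfl
  have iter_mem : ∀ (k : ℕ) (ω : Ω), ω ∈ A → T^[k] ω ∈ A := by
    intro k
    induction k with
    | zero => exact fun ω hω => hω
    | succ k ih =>
      intro ω hω
      rw [Function.iterate_succ_apply']
      exact (mem_iff _).mpr (ih ω hω)
  have hS_mem : ∀ (k : ℕ) (ω : Ω), ω ∈ A → birkhoffSum T h k ω = birkhoffSum T g k ω := by
    intro k ω hω
    refine Finset.sum_congr rfl fun i _ => ?_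
    exact Set.indicator_of_mem (iter_mem i ω hω) g
  have hM_notmem : ∀ (n : ℕ) (ω : Ω), ω ∉ A → maxBirk T h n ω = 0 := by
    intro n
    induction n with
    | zero => intro ω _; rfl
    | succ n ih =>
      intro ω hω
      have hTω : T ω ∉ A := fun hc => hω ((mem_iff ω).mp hc)
      have : h ω = 0 := Set.indicator_of_notMem hω g
      simp [maxBirk, this, ih (T ω) hTω]
  have hM_mem : ∀ (n : ℕ) (ω : Ω), ω ∈ A → maxBirk T h n ω = maxBirk T g n ω := by
    intro n
    induction n with
    | zero => intro ω _; rfl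
    | succ n ih =>
      intro ω hω
      have hTω : T ω ∈ A := (mem_iff ω).mpr hω
      have : h ω = g ω := Set.indicator_of_mem hω g
      simp [maxBirk, this, ih (T ω) hTω]
  set B : ℕ → Set Ω := fun n => {ω | 0 < maxBirk T h (n+1) ω} with hB
  have hBmeas : ∀ n, MeasurableSet (B n) := fun n =>
    (measurable_maxBirk hT.measurable hm (n+1)) (measurableSet_Ioi (a := (0:ℝ)))
  have hBA : ∀ n, B n ⊆ A := by
    intro n ω hω
    by_contra hc
    have := hM_notmem (n+1) ω hc
    have h0 : (0:ℝ) < maxBirk T h (n+1) ω := hω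
    rw [this] at h0
    exact lt_irrefl 0 h0
  have hind_eq : ∀ n, (B n).indicator h = (B n).indicator g := by
    intro n
    funext ω
    by_cases hω : ω ∈ B n
    · rw [Set.indicator_of_mem hω, Set.indicator_of_mem hω, hh,
        Set.indicator_of_mem (hBA n hω)]
    · rw [Set.indicator_of_notMem hω, Set.indicator_of_notMem hω]
  have hten : ∀ ω, Tendsto (fun n => (B n).indicator g ω) atTop (nhds (A.indicator g ω)) := by
    intro ω
    by_cases hω : ω ∈ A
    · obtain ⟨m, hm0⟩ := hsub ω hω
      have hev : ∀ᶠ n in atTop, A.indicator g ω = (B n).indicator g ω := by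
        refine eventually_atTop.mpr ⟨m, fun n hn => ?_⟩
        have hobs : 0 < birkhoffSum T h (m+1) ω := by rw [hS_mem (m+1) ω hω]; exact hm0
        have hmem : ω ∈ B n :=
          lt_of_lt_of_le hobs (birkhoffSum_le_maxBirk (n+1) (m+1) (Nat.succ_le_succ hn) ω)
        rw [Set.indicator_of_mem hmem, Set.indicator_of_mem hω]
      exact Tendsto.congr' hev tendsto_const_nhds
    · have hBn : ∀ n, (B n).indicator g ω = 0 := fun n =>
        Set.indicator_of_notMem (fun hc => hω (hBA n hc)) g
      have hA0 : A.indicator g ω = 0 := Set.indicator_of_notMem hω g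
      rw [hA0]
      simpa [hBn] using tendsto_const_nhds (α := ℝ) (f := atTop (α := ℕ)) (a := 0)
  have hdom : Tendsto (fun n => ∫ ω, (B n).indicator g ω ∂P) atTop
      (nhds (∫ ω, A.indicator g ω ∂P)) := by
    refine tendsto_integral_of_dominated_convergence (fun ω => |g ω|) ?_ hgi.abs ?_ ?_
    · exact fun n => (hg.indicator (hBmeas n)).aestronglyMeasurable
    · intro n
      refine Eventually.of_forall fun ω => ?_
      by_cases hω : ω ∈ B n <;>
        simp [Set.indicator_of_mem, Set.indicator_of_notMem, hω, abs_nonneg, le_abs_self]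
    · exact Eventually.of_forall hten
  have hnn : ∀ n, 0 ≤ ∫ ω, (B n).indicator g ω ∂P := by
    intro n
    have := maximal_ergodic hT hm hi n
    rwa [hind_eq n] at this
  have : 0 ≤ ∫ ω, A.indicator g ω ∂P := ge_of_tendsto' hdom hnn
  rwa [integral_indicator hA] at this

/-- The (EReal-valued) limsup of Birkhoff averages is exactly invariant. -/
lemma limsup_birkhoff_avg_comp (ω : Ω) :
    limsup (fun n => ((birkhoffSum T g n (T ω) / n : ℝ) : EReal)) atTop
      = limsup (fun n => ((birkhoffSum T g n ω / n : ℝ) : EReal)) atTop := by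
  set u : ℕ → EReal := fun n => ((birkhoffSum T g n ω / n : ℝ) : EReal) with hu
  set v : ℕ → EReal := fun n => ((birkhoffSum T g n (T ω) / n : ℝ) : EReal) with hv
  refine le_antisymm ?_ ?_
  · -- limsup v ≤ limsup u
    by_contra hlt
    push_neg at hlt
    obtain ⟨c, hc1, hc2⟩ := EReal.exists_between_coe_real hlt
    obtain ⟨c', hc1', hc2'⟩ := EReal.exists_between_coe_real hc2
    rw [EReal.coe_lt_coe_iff] at hc1'
    have hev : ∀ᶠ n in atTop, u n < (c : EReal) := eventually_lt_of_limsup_lt hc1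
    have hevR : ∀ᶠ n in atTop, birkhoffSum T g n ω / n < c := by
      filter_upwards [hev] with n hn
      simp only [hu] at hn
      exact_mod_cast hn
    obtain ⟨N, hN⟩ := eventually_atTop.mp hevR
    have hN2 : ∀ᶠ n : ℕ in atTop, c - g ω ≤ (c' - c) * n :=
      Tendsto.eventually_ge_atTop
        ((tendsto_natCast_atTop_atTop (R := ℝ)).const_mul_atTop (sub_pos.mpr hc1')) _
    have hfin : ∀ᶠ n : ℕ in atTop, birkhoffSum T g n (T ω) / n ≤ c' := by
      filter_upwards [hN2, eventually_ge_atTop N, eventually_ge_atTop 1] with n hn2 hnN hn1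
      have hn0 : (0:ℝ) < n := by exact_mod_cast hn1
      have hS : birkhoffSum T g (n+1) ω < c * ((n:ℝ)+1) := by
        have := hN (n+1) (le_trans hnN (Nat.le_succ n))
        have hpos : (0:ℝ) < ((n:ℝ)+1) := by positivity
        push_cast at this
        rw [div_lt_iff₀ hpos] at this
        exact this
      have hrel : birkhoffSum T g n (T ω) = birkhoffSum T g (n+1) ω - g ω := by
        rw [birkhoffSum_succ']; ring
      have : birkhoffSum T g n (T ω) ≤ c' * n := by
        rw [hrel]
        have : c * ((n:ℝ)+1) - g ω ≤ c' * n := by nlinarith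
        nlinarith
      rw [div_le_iff₀ hn0]
      exact this
    have : limsup v atTop ≤ (c' : EReal) := by
      refine limsup_le_of_le ?_ ?_
      · isBoundedDefault
      · filter_upwards [hfin] with n hn
        simp only [hv]
        exact_mod_cast hn
    exact absurd (lt_of_lt_of_le hc2' this) (lt_irrefl _)
  · -- limsup u ≤ limsup v
    by_contra hlt
    push_neg at hlt
    obtain ⟨c, hc1, hc2⟩ := EReal.exists_between_coe_real hlt
    obtain ⟨c', hc1', hc2'⟩ := EReal.exists_between_coe_real hc2
    rw [EReal.coe_lt_coe_iff] at hc1'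
    have hev : ∀ᶠ n in atTop, v n < (c : EReal) := eventually_lt_of_limsup_lt hc1
    have hevR : ∀ᶠ n in atTop, birkhoffSum T g n (T ω) / n < c := by
      filter_upwards [hev] with n hn
      simp only [hv] at hn
      exact_mod_cast hn
    obtain ⟨N, hN⟩ := eventually_atTop.mp hevR
    have hN2 : ∀ᶠ n : ℕ in atTop, g ω - c' ≤ (c' - c) * n :=
      Tendsto.eventually_ge_atTop
        ((tendsto_natCast_atTop_atTop (R := ℝ)).const_mul_atTop (sub_pos.mpr hc1')) _
    have hfin : ∀ᶠ m : ℕ in atTop, birkhoffSum T g m ω / m ≤ c' := by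
      have hbase : ∀ᶠ n : ℕ in atTop, birkhoffSum T g (n+1) ω / (n+1) ≤ c' := by
        filter_upwards [hN2, eventually_ge_atTop N, eventually_ge_atTop 1] with n hn2 hnN hn1
        have hn0 : (0:ℝ) < n := by exact_mod_cast hn1
        have hS : birkhoffSum T g n (T ω) < c * n := by
          have := hN n hnN
          rw [div_lt_iff₀ hn0] at this
          exact this
        have hrel : birkhoffSum T g (n+1) ω = g ω + birkhoffSum T g n (T ω) :=
          birkhoffSum_succ' T g n ω
        have hpos : (0:ℝ) < ((n:ℝ)+1) := by positivity
        rw [div_le_iff₀ hpos]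
        rw [hrel]
        nlinarith
      obtain ⟨N', hN'⟩ := eventually_atTop.mp hbase
      refine eventually_atTop.mpr ⟨N' + 1, fun m hm => ?_⟩
      obtain ⟨n, rfl⟩ : ∃ n, m = n + 1 := ⟨m - 1, by omega⟩
      have hn' : N' ≤ n := by omega
      have := hN' n hn'
      push_cast
      exact this
    have : limsup u atTop ≤ (c' : EReal) := by
      refine limsup_le_of_le ?_ ?_
      · isBoundedDefault
      · filter_upwards [hfin] with n hn
        simp only [hu]
        exact_mod_cast hn
    exact absurd (lt_of_lt_of_le hc2' this) (lt_irrefl _)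


lemma ae_limsup_nonpos {P : Measure Ω} [IsProbabilityMeasure P]
    (hT : Ergodic T P) (hg : Measurable g) (hgi : Integrable g P)
    (hneg : ∫ ω, g ω ∂P < 0) :
    ∀ᵐ ω ∂P, limsup (fun n => ((birkhoffSum T g n ω / n : ℝ) : EReal)) atTop ≤ 0 := by
  set L : Ω → EReal := fun ω => limsup (fun n => ((birkhoffSum T g n ω / n : ℝ) : EReal)) atTop
    with hL
  have hLmeas : Measurable L := by
    refine Measurable.limsup fun n => ?_
    exact measurable_coe_real_ereal.comp
      ((measurable_birkhoffSum hT.toMeasurePreserving.measurable hg n).div_const _)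
  set A : Set Ω := {ω | 0 < L ω} with hA
  have hAm : MeasurableSet A := hLmeas measurableSet_Ioi
  have hinv : T ⁻¹' A = A := by
    ext ω
    simp only [Set.mem_preimage, hA, Set.mem_setOf_eq, hL]
    rw [limsup_birkhoff_avg_comp (T := T) (g := g) ω]
  have hsub : ∀ ω ∈ A, ∃ n, 0 < birkhoffSum T g (n+1) ω := by
    intro ω hω
    by_contra hc
    push_neg at hc
    have hev : ∀ᶠ n : ℕ in atTop, ((birkhoffSum T g n ω / n : ℝ) : EReal) ≤ (0:EReal) := by
      refine eventually_atTop.mpr ⟨1, fun n hn => ?_⟩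
      obtain ⟨m, rfl⟩ : ∃ m, n = m + 1 := ⟨n - 1, by omega⟩
      have h1 : birkhoffSum T g (m+1) ω ≤ 0 := hc m
      have h2 : birkhoffSum T g (m+1) ω / ((m:ℝ)+1) ≤ 0 :=
        div_nonpos_iff.mpr (Or.inr ⟨h1, by positivity⟩)
      have : ((birkhoffSum T g (m+1) ω / ((m:ℝ)+1) : ℝ) : EReal) ≤ ((0:ℝ) : EReal) := by
        exact_mod_cast h2
      simpa using this
    have : L ω ≤ 0 := limsup_le_of_le (by isBoundedDefault) hev
    exact absurd (lt_of_lt_of_le hω this) (lt_irrefl _)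
  rcases hT.toPreErgodic.measure_self_or_compl_eq_zero hAm hinv with h0 | h1
  · rw [ae_iff]
    have : {ω | ¬ L ω ≤ 0} = A := by
      ext ω; simp [hA, not_le]
    rwa [this]
  · exfalso
    have hfull : ∀ᵐ ω ∂P, ω ∈ A := by
      rw [ae_iff]
      exact h1
    have hres : P.restrict A = P := Measure.restrict_eq_self_of_ae_mem hfull
    have := setIntegral_nonneg_invariant hT.toMeasurePreserving hg hgi hAm hinv hsub
    rw [hres] at this
    linarith

theorem birkhoff_ae_tendsto {P : Measure Ω} [IsProbabilityMeasure P]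
    (hT : Ergodic T P) (hg : Measurable g) (hgi : Integrable g P) :
    ∀ᵐ ω ∂P, Tendsto (fun n : ℕ => (n:ℝ)⁻¹ * birkhoffSum T g n ω) atTop
      (nhds (∫ ω, g ω ∂P)) := by
  set I : ℝ := ∫ ω, g ω ∂P with hI
  have key : ∀ ε : ℝ, 0 < ε →
      (∀ᵐ ω ∂P, ∀ᶠ n : ℕ in atTop, birkhoffSum T g n ω / n < I + ε) := by
    intro ε hε
    set h : Ω → ℝ := fun ω => g ω - (I + ε/2) with hh
    have hhm : Measurable h := hg.sub measurable_const
    have hhi : Integrable h P := hgi.sub (integrable_const _)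
    have hhneg : ∫ ω, h ω ∂P < 0 := by
      rw [hh]
      rw [integral_sub hgi (integrable_const _), integral_const]
      simp [← hI]
      linarith
    have hbs : ∀ n ω, birkhoffSum T h n ω = birkhoffSum T g n ω - n * (I + ε/2) := by
      intro n ω
      simp only [birkhoffSum, hh]
      rw [Finset.sum_sub_distrib, Finset.sum_const, Finset.card_range, nsmul_eq_mul]
    filter_upwards [ae_limsup_nonpos hT hhm hhi hhneg] with ω hω
    have hev : ∀ᶠ n : ℕ in atTop, ((birkhoffSum T h n ω / n : ℝ) : EReal) < ((ε/2 : ℝ) : EReal) := by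
      refine eventually_lt_of_limsup_lt ?_ (by isBoundedDefault)
      calc limsup (fun n => ((birkhoffSum T h n ω / n : ℝ) : EReal)) atTop ≤ 0 := hω
        _ < ((ε/2 : ℝ) : EReal) := by exact_mod_cast half_pos hε
    filter_upwards [hev, eventually_ge_atTop 1] with n hn hn1
    have hn0 : (0:ℝ) < n := by exact_mod_cast hn1
    rw [EReal.coe_lt_coe_iff] at hn
    rw [hbs] at hn
    rw [div_lt_iff₀ hn0] at hn
    rw [div_lt_iff₀ hn0]
    nlinarith
  have key' : ∀ ε : ℝ, 0 < ε →
      (∀ᵐ ω ∂P, ∀ᶠ n : ℕ in atTop, I - ε < birkhoffSum T g n ω / n) := by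
    intro ε hε
    set h : Ω → ℝ := fun ω => -g ω - (-I + ε/2) with hh
    have hhm : Measurable h := hg.neg.sub measurable_const
    have hhi : Integrable h P := hgi.neg.sub (integrable_const _)
    have hhneg : ∫ ω, h ω ∂P < 0 := by
      rw [hh]
      have : Integrable (fun ω => -g ω) P := hgi.neg
      rw [integral_sub this (integrable_const _), integral_neg, integral_const]
      simp [← hI]
      linarith
    have hbs : ∀ n ω, birkhoffSum T h n ω = -birkhoffSum T g n ω - n * (-I + ε/2) := by
      intro n ω
      simp only [birkhoffSum, hh]
      rw [Finset.sum_sub_distrib, Finset.sum_const, Finset.card_range, nsmul_eq_mul,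
        Finset.sum_neg_distrib]
    filter_upwards [ae_limsup_nonpos hT hhm hhi hhneg] with ω hω
    have hev : ∀ᶠ n : ℕ in atTop, ((birkhoffSum T h n ω / n : ℝ) : EReal) < ((ε/2 : ℝ) : EReal) := by
      refine eventually_lt_of_limsup_lt ?_ (by isBoundedDefault)
      calc limsup (fun n => ((birkhoffSum T h n ω / n : ℝ) : EReal)) atTop ≤ 0 := hω
        _ < ((ε/2 : ℝ) : EReal) := by exact_mod_cast half_pos hε
    filter_upwards [hev, eventually_ge_atTop 1] with n hn hn1
    have hn0 : (0:ℝ) < n := by exact_mod_cast hn1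
    rw [EReal.coe_lt_coe_iff] at hn
    rw [hbs] at hn
    rw [div_lt_iff₀ hn0] at hn
    rw [lt_div_iff₀ hn0]
    nlinarith
  have hall : ∀ᵐ ω ∂P, ∀ m : ℕ,
      (∀ᶠ n : ℕ in atTop, birkhoffSum T g n ω / n < I + 1/(m+1)) ∧
      (∀ᶠ n : ℕ in atTop, I - 1/(m+1) < birkhoffSum T g n ω / n) := by
    rw [ae_all_iff]
    intro m
    have h1 := key (1/(m+1)) (by positivity)
    have h2 := key' (1/(m+1)) (by positivity)
    filter_upwards [h1, h2] with ω hω1 hω2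
    exact ⟨hω1, hω2⟩
  filter_upwards [hall] with ω hω
  rw [Metric.tendsto_atTop]
  intro ε hε
  obtain ⟨m, hm⟩ := exists_nat_one_div_lt hε
  obtain ⟨N1, hN1⟩ := eventually_atTop.mp (hω m).1
  obtain ⟨N2, hN2⟩ := eventually_atTop.mp (hω m).2
  refine ⟨max N1 N2, fun n hn => ?_⟩
  have e1 := hN1 n (le_trans (le_max_left _ _) hn)
  have e2 := hN2 n (le_trans (le_max_right _ _) hn)
  rw [Real.dist_eq, inv_mul_eq_div]
  have : |birkhoffSum T g n ω / n - I| < 1/(m+1) := by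
    rw [abs_sub_lt_iff]
    constructor <;> [linarith; linarith]
  calc |birkhoffSum T g n ω / n - I| < 1/(m+1) := this
    _ < ε := by exact_mod_cast hm


lemma sum_Icc_eq_birkhoffSum_comp (n : ℕ) (ω : Ω) :
    ∑ k ∈ Finset.Icc 1 n, g (T^[k] ω) = birkhoffSum T g n (T ω) := by
  rw [birkhoffSum]
  rw [← Finset.Ico_add_one_right_eq_Icc, Finset.sum_Ico_eq_sum_range]
  refine Finset.sum_congr (by simp) fun i _ => ?_
  rw [Nat.add_comm 1 i, Function.iterate_succ_apply]

theorem birkhoff_ae_tendsto_Icc {P : Measure Ω} [IsProbabilityMeasure P]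
    (hT : Ergodic T P) (hg : Measurable g) (hgi : Integrable g P) :
    ∀ᵐ ω ∂P, Tendsto (fun n : ℕ => (n:ℝ)⁻¹ * ∑ k ∈ Finset.Icc 1 n, g (T^[k] ω)) atTop
      (nhds (∫ ω, g ω ∂P)) := by
  have h := birkhoff_ae_tendsto hT hg hgi
  have h2 : ∀ᵐ ω ∂P, Tendsto (fun n : ℕ => (n:ℝ)⁻¹ * birkhoffSum T g n (T ω)) atTop
      (nhds (∫ ω, g ω ∂P)) :=
    hT.toMeasurePreserving.quasiMeasurePreserving.tendsto_ae.eventually h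
  filter_upwards [h2] with ω hω
  refine hω.congr fun n => ?_
  rw [sum_Icc_eq_birkhoffSum_comp]


end Birkhoff


/-- locally uniform law of large numbers, Lemma 15. Let `T`
be a measure-preserving ergodic transformation of a probability space
`(Ω, P)`, `Θ ⊆ ℝᵖ`, `θ ∈ Θ`, `δ₀ > 0`, and let `f : Θ × Ω → ℝ` be measurable in
`ω` for each parameter, a.s. continuous in the parameter on `B̄(θ, δ₀) ∩ Θ`, and
dominated there by an integrable envelope (the pointwise supremum, assumed
finite and integrable). Then, almost surely,
`lim_{δ↓0} limsup_{n→∞} sup_{θ′ ∈ B̄(θ,δ) ∩ Θ}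
  |n⁻¹ ∑_{k=1}ⁿ f(θ′, Tᵏω) − ∫ f(θ, ·) dP| = 0`. -/
theorem locally_uniform_birkhoff
    {Ω : Type*} [MeasurableSpace Ω] (P : Measure Ω) [IsProbabilityMeasure P]
    (T : Ω → Ω) (hT : Ergodic T P)
    (p : ℕ) (Θ : Set (EuclideanSpace ℝ (Fin p)))
    (θ : EuclideanSpace ℝ (Fin p)) (hθ : θ ∈ Θ)
    (δ₀ : ℝ) (hδ₀ : 0 < δ₀)
    (f : EuclideanSpace ℝ (Fin p) → Ω → ℝ)
    (hmeas : ∀ θ' ∈ Θ, Measurable (f θ'))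
    (hcont : ∀ᵐ ω ∂P, ContinuousOn (fun θ' => f θ' ω) (Metric.closedBall θ δ₀ ∩ Θ))
    (hbdd : ∀ ω, BddAbove ((fun θ' => |f θ' ω|) '' (Metric.closedBall θ δ₀ ∩ Θ)))
    (hint : Integrable
      (fun ω => ⨆ θ' : (Metric.closedBall θ δ₀ ∩ Θ : Set (EuclideanSpace ℝ (Fin p))),
        |f θ'.1 ω|) P) :
    ∀ᵐ ω ∂P,
      Tendsto
        (fun δ : ℝ =>
          limsup
            (fun n : ℕ =>
              ⨆ θ' : (Metric.closedBall θ δ ∩ Θ : Set (EuclideanSpace ℝ (Fin p))),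
                |(n : ℝ)⁻¹ * ∑ k ∈ Finset.Icc 1 n, f θ'.1 (T^[k] ω) -
                  ∫ ω', f θ ω' ∂P|)
            atTop)
        (nhdsWithin 0 (Set.Ioi 0)) (nhds 0) := by
  classical
  set K : Set (EuclideanSpace ℝ (Fin p)) := Metric.closedBall θ δ₀ ∩ Θ with hK
  have hθK : θ ∈ K := ⟨Metric.mem_closedBall_self hδ₀.le, hθ⟩
  set I : ℝ := ∫ ω', f θ ω' ∂P with hI
  set env : Ω → ℝ := fun ω => ⨆ θ' : ↥K, |f θ'.1 ω| with henv
  -- envelope facts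
  have henv_bdd : ∀ ω, BddAbove (Set.range fun θ' : ↥K => |f θ'.1 ω|) := by
    intro ω
    have := hbdd ω
    rwa [Set.image_eq_range] at this
  have henv_le : ∀ (ω : Ω) (x : EuclideanSpace ℝ (Fin p)), x ∈ K → |f x ω| ≤ env ω :=
    fun ω x hx => le_ciSup (henv_bdd ω) (⟨x, hx⟩ : ↥K)
  have henv_nonneg : ∀ ω, 0 ≤ env ω :=
    fun ω => le_trans (abs_nonneg _) (henv_le ω θ hθK)
  -- countable dense subset of K
  obtain ⟨s, hs_count, hs_dense⟩ := TopologicalSpace.exists_countable_dense (↥K)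
  set D : Set (EuclideanSpace ℝ (Fin p)) := insert θ (Subtype.val '' s) with hD
  have hD_count : D.Countable := ((hs_count.image _).insert θ)
  have hDK : D ⊆ K := by
    rintro x hx
    rcases Set.mem_insert_iff.mp hx with rfl | ⟨y, _, rfl⟩
    · exact hθK
    · exact y.2
  have hD_dense : ∀ x ∈ K, ∀ r : ℝ, 0 < r → ∃ d ∈ D, dist d x < r := by
    intro x hx r hr
    obtain ⟨y, hy, hyd⟩ := hs_dense.exists_dist_lt (⟨x, hx⟩ : ↥K) hr
    refine ⟨y.1, Set.mem_insert_of_mem _ ⟨y, hy, rfl⟩, ?_⟩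
    rw [dist_comm] at hyd
    exact hyd
  -- radii
  set δseq : ℕ → ℝ := fun m => δ₀ / (m + 1) with hδseq
  have hδseq_pos : ∀ m, 0 < δseq m := fun m => by positivity
  have hδseq_le : ∀ m, δseq m ≤ δ₀ := by
    intro m
    rw [hδseq]
    rw [div_le_iff₀ (by positivity)]
    nlinarith [hδ₀.le, (Nat.cast_nonneg m : (0:ℝ) ≤ m)]
  have hδseq_lt : ∀ m, δseq (m+1) < δseq m := by
    intro m
    apply div_lt_div_of_pos_left hδ₀ (by positivity)
    push_cast
    linarith
  -- countable index sets
  set Dm : ℕ → Set (EuclideanSpace ℝ (Fin p)) := fun m => D ∩ Metric.closedBall θ (δseq m)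
    with hDm
  have hDm_count : ∀ m, (Dm m).Countable := fun m => hD_count.mono Set.inter_subset_left
  have hθDm : ∀ m, θ ∈ Dm m :=
    fun m => ⟨Set.mem_insert _ _, Metric.mem_closedBall_self (hδseq_pos m).le⟩
  have hDmK : ∀ m, Dm m ⊆ K := fun m => le_trans Set.inter_subset_left hDK
  -- the moduli of continuity
  set g : ℕ → Ω → ℝ := fun m ω => ⨆ d : ↥(Dm m), |f d.1 ω - f θ ω| with hg
  have hg_bdd : ∀ m ω, BddAbove (Set.range fun d : ↥(Dm m) => |f d.1 ω - f θ ω|) := by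
    intro m ω
    refine ⟨2 * env ω, ?_⟩
    rintro x ⟨d, rfl⟩
    calc |f d.1 ω - f θ ω| ≤ |f d.1 ω| + |f θ ω| := abs_sub _ _
      _ ≤ env ω + env ω := add_le_add (henv_le ω d.1 (hDmK m d.2)) (henv_le ω θ hθK)
      _ = 2 * env ω := by ring
  have hg_nonneg : ∀ m ω, 0 ≤ g m ω := by
    intro m ω
    have := le_ciSup (hg_bdd m ω) (⟨θ, hθDm m⟩ : ↥(Dm m))
    simpa using this
  have hg_le : ∀ m ω, g m ω ≤ 2 * env ω := by
    intro m ω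
    refine Real.iSup_le (fun d => ?_) (by linarith [henv_nonneg ω])
    calc |f d.1 ω - f θ ω| ≤ |f d.1 ω| + |f θ ω| := abs_sub _ _
      _ ≤ env ω + env ω := add_le_add (henv_le ω d.1 (hDmK m d.2)) (henv_le ω θ hθK)
      _ = 2 * env ω := by ring
  have hg_meas : ∀ m, Measurable (g m) := by
    intro m
    haveI := (hDm_count m).to_subtype
    exact Measurable.iSup fun d =>
      ((hmeas d.1 (hDmK m d.2).2).sub (hmeas θ hθ)).abs
  have h2env_int : Integrable (fun ω => 2 * env ω) P := hint.const_mul 2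
  have hg_int : ∀ m, Integrable (g m) P := by
    intro m
    refine h2env_int.mono ((hg_meas m).aestronglyMeasurable) (Eventually.of_forall fun ω => ?_)
    rw [Real.norm_eq_abs, Real.norm_eq_abs, abs_of_nonneg (hg_nonneg m ω)]
    exact le_trans (hg_le m ω) (le_abs_self _)
  -- key estimate: on the continuity set, the oscillation on the small ball is ≤ g m
  have key2 : ∀ ω, ContinuousOn (fun θ' => f θ' ω) K → ∀ m,
      ∀ x ∈ Metric.closedBall θ (δseq (m+1)) ∩ Θ, |f x ω - f θ ω| ≤ g m ω := by
    intro ω hcω m x hx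
    have hxK : x ∈ K := ⟨Metric.closedBall_subset_closedBall (hδseq_le (m+1)) hx.1, hx.2⟩
    refine le_of_forall_pos_le_add fun ε hε => ?_
    have hc := hcω x hxK
    rw [Metric.continuousWithinAt_iff] at hc
    obtain ⟨r, hr, hball⟩ := hc ε hε
    set r' : ℝ := min r (δseq m - δseq (m+1)) with hr'
    have hr'pos : 0 < r' := lt_min hr (sub_pos.mpr (hδseq_lt m))
    obtain ⟨d, hdD, hdist⟩ := hD_dense x hxK r' hr'pos
    have hdK : d ∈ K := hDK hdD
    have hdm : d ∈ Dm m := by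
      refine ⟨hdD, ?_⟩
      rw [Metric.mem_closedBall]
      have h1 : dist d θ ≤ dist d x + dist x θ := dist_triangle d x θ
      have h2 : dist x θ ≤ δseq (m+1) := Metric.mem_closedBall.mp hx.1
      have h3 : dist d x < δseq m - δseq (m+1) := lt_of_lt_of_le hdist (min_le_right _ _)
      linarith
    have h1 : |f d ω - f x ω| < ε := by
      have := hball hdK (lt_of_lt_of_le hdist (min_le_left _ _))
      rwa [Real.dist_eq] at this
    have h2 : |f d ω - f θ ω| ≤ g m ω := le_ciSup (hg_bdd m ω) (⟨d, hdm⟩ : ↥(Dm m))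
    have h3 : |f x ω - f θ ω| ≤ |f x ω - f d ω| + |f d ω - f θ ω| := abs_sub_le _ _ _
    rw [abs_sub_comm (f x ω) (f d ω)] at h3
    linarith
  -- pointwise convergence of the moduli to zero
  have key3 : ∀ ω, ContinuousOn (fun θ' => f θ' ω) K →
      Tendsto (fun m => g m ω) atTop (nhds 0) := by
    intro ω hcω
    rw [Metric.tendsto_atTop]
    intro ε hε
    have hc := hcω θ hθK
    rw [Metric.continuousWithinAt_iff] at hc
    obtain ⟨r, hr, hball⟩ := hc (ε/2) (half_pos hε)
    obtain ⟨M, hM⟩ := exists_nat_one_div_lt (div_pos hr hδ₀)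
    refine ⟨M, fun m hm => ?_⟩
    have hδm : δseq m < r := by
      have h1 : δseq m ≤ δseq M := by
        rw [hδseq]
        apply div_le_div_of_nonneg_left hδ₀.le (by positivity)
        push_cast
        exact_mod_cast add_le_add (Nat.cast_le.mpr hm) le_rfl
      have h2 : δseq M < r := by
        rw [hδseq, div_lt_iff₀ (by positivity : (0:ℝ) < (M:ℝ)+1)]
        rw [div_lt_div_iff₀ (by positivity : (0:ℝ) < (M:ℝ)+1) hδ₀] at hM
        linarith
      linarith
    have hgm : g m ω ≤ ε/2 := by
      refine Real.iSup_le (fun d => ?_) (half_pos hε).le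
      have hd : dist d.1 θ < r := lt_of_le_of_lt (Metric.mem_closedBall.mp d.2.2) hδm
      have := hball (hDmK m d.2) hd
      rw [Real.dist_eq] at this
      exact this.le
    rw [Real.dist_eq, sub_zero, abs_of_nonneg (hg_nonneg m ω)]
    linarith
  -- convergence of the integrals of the moduli
  have key4 : Tendsto (fun m => ∫ ω, g m ω ∂P) atTop (nhds 0) := by
    have h0 : (0:ℝ) = ∫ _ : Ω, (0:ℝ) ∂P := by simp
    rw [h0]
    refine tendsto_integral_of_dominated_convergence (fun ω => 2 * env ω)
      (fun m => (hg_meas m).aestronglyMeasurable) h2env_int (fun m => ?_) ?_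
    · refine Eventually.of_forall fun ω => ?_
      rw [Real.norm_eq_abs, abs_of_nonneg (hg_nonneg m ω)]
      exact hg_le m ω
    · filter_upwards [hcont] with ω hcω
      exact key3 ω hcω
  -- integrability of f θ
  have hfθ_int : Integrable (f θ) P := by
    refine hint.mono ((hmeas θ hθ).aestronglyMeasurable) (Eventually.of_forall fun ω => ?_)
    rw [Real.norm_eq_abs, Real.norm_eq_abs]
    exact le_trans (henv_le ω θ hθK) (le_abs_self _)
  -- Birkhoff theorem applications
  have hB1 : ∀ᵐ ω ∂P, Tendsto (fun n : ℕ => (n:ℝ)⁻¹ * ∑ k ∈ Finset.Icc 1 n, f θ (T^[k] ω))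
      atTop (nhds I) := birkhoff_ae_tendsto_Icc hT (hmeas θ hθ) hfθ_int
  have hB2 : ∀ᵐ ω ∂P, ∀ m : ℕ,
      Tendsto (fun n : ℕ => (n:ℝ)⁻¹ * ∑ k ∈ Finset.Icc 1 n, g m (T^[k] ω))
        atTop (nhds (∫ ω', g m ω' ∂P)) :=
    ae_all_iff.mpr fun m => birkhoff_ae_tendsto_Icc hT (hg_meas m) (hg_int m)
  have hC : ∀ᵐ ω ∂P, ∀ k : ℕ, ContinuousOn (fun θ' => f θ' (T^[k] ω)) K :=
    ae_all_iff.mpr fun k =>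
      ((hT.toMeasurePreserving.iterate k).quasiMeasurePreserving.tendsto_ae.eventually hcont)
  filter_upwards [hB1, hB2, hC] with ω h1 h2 h3
  rw [Metric.tendsto_nhdsWithin_nhds]
  intro ε hε
  obtain ⟨m, hm⟩ := (key4.eventually (gt_mem_nhds hε)).exists
  refine ⟨δseq (m+1), hδseq_pos (m+1), ?_⟩
  intro δ hδIoi hδdist
  have hδ0 : (0:ℝ) < δ := hδIoi
  have hδle : δ ≤ δseq (m+1) := by
    rw [Real.dist_eq, sub_zero, abs_of_nonneg hδ0.le] at hδdist
    exact hδdist.le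
  set a : ℕ → ℝ := fun n =>
    ⨆ θ' : (Metric.closedBall θ δ ∩ Θ : Set (EuclideanSpace ℝ (Fin p))),
      |(n : ℝ)⁻¹ * ∑ k ∈ Finset.Icc 1 n, f θ'.1 (T^[k] ω) - I| with ha
  have ha_nonneg : ∀ n, 0 ≤ a n := fun n => Real.iSup_nonneg fun θ' => abs_nonneg _
  have hsub_bdd : ∀ (n : ℕ), ∀ θ' : (Metric.closedBall θ δ ∩ Θ : Set (EuclideanSpace ℝ (Fin p))),
      |(n : ℝ)⁻¹ * ∑ k ∈ Finset.Icc 1 n, f θ'.1 (T^[k] ω) - I|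
        ≤ (n:ℝ)⁻¹ * ∑ k ∈ Finset.Icc 1 n, g m (T^[k] ω)
          + |(n:ℝ)⁻¹ * ∑ k ∈ Finset.Icc 1 n, f θ (T^[k] ω) - I| := by
    intro n θ'
    have hθ'mem : θ'.1 ∈ Metric.closedBall θ (δseq (m+1)) ∩ Θ :=
      ⟨Metric.closedBall_subset_closedBall hδle θ'.2.1, θ'.2.2⟩
    have hterm : ∀ k ∈ Finset.Icc 1 n,
        |f θ'.1 (T^[k] ω) - f θ (T^[k] ω)| ≤ g m (T^[k] ω) :=
      fun k _ => key2 (T^[k] ω) (h3 k) m θ'.1 hθ'mem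
    have hdiff : |(n : ℝ)⁻¹ * ∑ k ∈ Finset.Icc 1 n, f θ'.1 (T^[k] ω)
        - (n:ℝ)⁻¹ * ∑ k ∈ Finset.Icc 1 n, f θ (T^[k] ω)|
        ≤ (n:ℝ)⁻¹ * ∑ k ∈ Finset.Icc 1 n, g m (T^[k] ω) := by
      rw [← mul_sub, ← Finset.sum_sub_distrib, abs_mul, abs_of_nonneg (by positivity : (0:ℝ) ≤ (n:ℝ)⁻¹)]
      refine mul_le_mul_of_nonneg_left ?_ (by positivity)
      calc |∑ k ∈ Finset.Icc 1 n, (f θ'.1 (T^[k] ω) - f θ (T^[k] ω))|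
          ≤ ∑ k ∈ Finset.Icc 1 n, |f θ'.1 (T^[k] ω) - f θ (T^[k] ω)| :=
            Finset.abs_sum_le_sum_abs _ _
        _ ≤ ∑ k ∈ Finset.Icc 1 n, g m (T^[k] ω) := Finset.sum_le_sum hterm
    calc |(n : ℝ)⁻¹ * ∑ k ∈ Finset.Icc 1 n, f θ'.1 (T^[k] ω) - I|
        ≤ |(n : ℝ)⁻¹ * ∑ k ∈ Finset.Icc 1 n, f θ'.1 (T^[k] ω)
            - (n:ℝ)⁻¹ * ∑ k ∈ Finset.Icc 1 n, f θ (T^[k] ω)|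
          + |(n:ℝ)⁻¹ * ∑ k ∈ Finset.Icc 1 n, f θ (T^[k] ω) - I| := abs_sub_le _ _ _
      _ ≤ (n:ℝ)⁻¹ * ∑ k ∈ Finset.Icc 1 n, g m (T^[k] ω)
          + |(n:ℝ)⁻¹ * ∑ k ∈ Finset.Icc 1 n, f θ (T^[k] ω) - I| := by
            exact add_le_add hdiff le_rfl
  set b : ℕ → ℝ := fun n => (n:ℝ)⁻¹ * ∑ k ∈ Finset.Icc 1 n, g m (T^[k] ω)
      + |(n:ℝ)⁻¹ * ∑ k ∈ Finset.Icc 1 n, f θ (T^[k] ω) - I| with hb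
  have hb_nonneg : ∀ n, 0 ≤ b n := by
    intro n
    have h01 : (0:ℝ) ≤ (n:ℝ)⁻¹ * ∑ k ∈ Finset.Icc 1 n, g m (T^[k] ω) := by
      refine mul_nonneg (by positivity) (Finset.sum_nonneg fun k _ => hg_nonneg m _)
    exact add_nonneg h01 (abs_nonneg _)
  have hab : ∀ n, a n ≤ b n := fun n =>
    Real.iSup_le (fun θ' => hsub_bdd n θ') (hb_nonneg n)
  have hbtend : Tendsto b atTop (nhds (∫ ω', g m ω' ∂P)) := by
    have hb2 : Tendsto (fun n : ℕ => |(n:ℝ)⁻¹ * ∑ k ∈ Finset.Icc 1 n, f θ (T^[k] ω) - I|)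
        atTop (nhds 0) := by
      have := ((h1.sub_const I).abs)
      simpa using this
    have := (h2 m).add hb2
    simpa using this
  have hlimsup_le : limsup a atTop ≤ ∫ ω', g m ω' ∂P := by
    have hcob : IsCoboundedUnder (· ≤ ·) atTop a :=
      isCoboundedUnder_le_of_le atTop (x := 0) fun n => ha_nonneg n
    calc limsup a atTop ≤ limsup b atTop :=
          limsup_le_limsup (Eventually.of_forall hab) hcob hbtend.isBoundedUnder_le
      _ = ∫ ω', g m ω' ∂P := hbtend.limsup_eq
  have hlimsup_nonneg : 0 ≤ limsup a atTop := by
    rw [limsup_eq]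
    refine Real.sInf_nonneg fun x hx => ?_
    obtain ⟨n, hn⟩ := hx.exists
    exact le_trans (ha_nonneg n) hn
  rw [Real.dist_eq, sub_zero, abs_of_nonneg hlimsup_nonneg]
  exact lt_of_le_of_lt hlimsup_le hm
end

section
/- For every ρ ∈ (0,1) and every integer n ≥ 0, ∑_{0 ≤ i ≤ j ≤ n} min(ρⁱ, ρ^{j−i}, ρ^{n−j}) ≤ 4 ρ^{n/4} / ((1 − ρ)(1 − ρ^{1/2})). (This double-sum inequality is established and used in the proof of Lemma 17 to bound the variance terms in the law of large numbers for the observed Fisher information.) -/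
set_option maxHeartbeats 1600000

/-- Auxiliary injection for `geometric_min_double_sum_bound`. -/
private def gmPhi (n : ℕ) (x : (_ : ℕ) × ℕ) : ℕ × ℕ × ℕ :=
  if x.1 - x.2 ≤ x.2 ∧ n - x.1 ≤ x.2 then
    (0, x.2 - (n + (x.1 - ((n - x.2) + (x.2 - (n - x.2)))) + 2) / 3,
      x.1 - ((n - x.2) + (x.2 - (n - x.2))))
  else if n - x.1 ≤ x.1 - x.2 then
    (1, (x.1 - x.2) - (n + (x.2 - (n - 2 * (x.1 - x.2))) + 2) / 3, x.2 - (n - 2 * (x.1 - x.2)))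
  else
    (2, (n - x.1) - (n + (x.2 - (2 * x.1 - n)) + 2) / 3, x.2 - (2 * x.1 - n))

private lemma gmPhi_spec (n : ℕ) (x : (_ : ℕ) × ℕ) (h2 : x.2 ≤ x.1) (h1 : x.1 ≤ n) :
    3 * n + 12 * (gmPhi n x).2.1 + 6 * (gmPhi n x).2.2
        ≤ 12 * max x.2 (max (x.1 - x.2) (n - x.1)) ∧
      (gmPhi n x).1 < 3 ∧ (gmPhi n x).2.1 < n + 1 ∧ (gmPhi n x).2.2 < n + 1 := by
  obtain ⟨j, i⟩ := x
  simp only at h1 h2 ⊢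
  set E := max i (max (j - i) (n - j)) with hE
  have e1 : i ≤ E := le_max_left _ _
  have e2 : j - i ≤ E := le_trans (le_max_left _ _) (le_max_right _ _)
  have e3 : n - j ≤ E := le_trans (le_max_right _ _) (le_max_right _ _)
  have e4 : E = i ∨ E = j - i ∨ E = n - j := by
    rcases max_choice i (max (j - i) (n - j)) with h | h
    · exact Or.inl h
    · rcases max_choice (j - i) (n - j) with h' | h'
      · exact Or.inr (Or.inl (h.trans h'))
      · exact Or.inr (Or.inr (h.trans h'))
  unfold gmPhi
  split_ifs with hc1 hc2 <;> simp only <;> omega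

private lemma gmPhi_inj (n : ℕ) (x y : (_ : ℕ) × ℕ)
    (hx2 : x.2 ≤ x.1) (hx1 : x.1 ≤ n) (hy2 : y.2 ≤ y.1) (hy1 : y.1 ≤ n)
    (h : gmPhi n x = gmPhi n y) : x = y := by
  obtain ⟨j1, i1⟩ := x
  obtain ⟨j2, i2⟩ := y
  simp only at hx1 hx2 hy1 hy2
  unfold gmPhi at h
  dsimp only at h
  have : j1 = j2 ∧ i1 = i2 := by
    split_ifs at h <;>
      simp only [Prod.mk.injEq] at h <;> omega
  simp [this.1, this.2]

private lemma gm_geom_le {x : ℝ} (h0 : 0 ≤ x) (h1 : x < 1) (N : ℕ) :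
    ∑ i ∈ Finset.range N, x ^ i ≤ 1 / (1 - x) := by
  have hx : (0:ℝ) < 1 - x := by linarith
  have heq : (x ^ N - 1) / (x - 1) = (1 - x ^ N) / (1 - x) := by
    rw [← neg_div_neg_eq]; ring_nf
  rw [geom_sum_eq h1.ne N, heq]
  exact (div_le_div_iff_of_pos_right hx).mpr (by nlinarith [pow_nonneg h0 N])


/-- double-sum inequality from the proof of Lemma 17. For
`ρ ∈ (0,1)` and every integer `n ≥ 0`,
`∑_{0 ≤ i ≤ j ≤ n} min(ρⁱ, ρ^{j−i}, ρ^{n−j}) ≤ 4 ρ^{n/4}/((1 − ρ)(1 − ρ^{1/2}))`. -/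
theorem geometric_min_double_sum_bound
    (ρ : ℝ) (hρ0 : 0 < ρ) (hρ1 : ρ < 1) (n : ℕ) :
    ∑ j ∈ Finset.range (n + 1), ∑ i ∈ Finset.range (j + 1),
        min (ρ ^ i) (min (ρ ^ (j - i)) (ρ ^ (n - j))) ≤
      4 * ρ ^ ((n : ℝ) / 4) / ((1 - ρ) * (1 - ρ ^ ((1 : ℝ) / 2))) := by
  set σ : ℝ := ρ ^ ((1:ℝ)/2) with hσdef
  have hσ0 : 0 < σ := Real.rpow_pos_of_pos hρ0 _
  have hσ1 : σ < 1 := Real.rpow_lt_one hρ0.le hρ1 (by norm_num)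
  have h1ρ : (0:ℝ) < 1 - ρ := by linarith
  have h1σ : (0:ℝ) < 1 - σ := by linarith
  have hr4 : (0:ℝ) < ρ ^ ((n:ℝ)/4) := Real.rpow_pos_of_pos hρ0 _
  have hmin : ∀ x y : ℕ, min (ρ ^ x) (ρ ^ y) = ρ ^ (max x y) := by
    intro x y
    rcases le_total x y with h | h
    · rw [max_eq_right h, min_eq_right (pow_le_pow_of_le_one hρ0.le hρ1.le h)]
    · rw [max_eq_left h, min_eq_left (pow_le_pow_of_le_one hρ0.le hρ1.le h)]
  set S : Finset ((_ : ℕ) × ℕ) :=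
    (Finset.range (n + 1)).sigma (fun j => Finset.range (j + 1)) with hS
  set T : Finset (ℕ × ℕ × ℕ) :=
    Finset.range 3 ×ˢ (Finset.range (n + 1) ×ˢ Finset.range (n + 1)) with hT
  set h : ℕ × ℕ × ℕ → ℝ :=
    fun y => ρ ^ ((n:ℝ)/4) * (ρ ^ y.2.1 * σ ^ y.2.2) with hh
  have hmemS : ∀ x ∈ S, x.2 ≤ x.1 ∧ x.1 ≤ n := by
    intro x hx
    rw [hS, Finset.mem_sigma, Finset.mem_range, Finset.mem_range] at hx
    omega
  have hval : ∀ p q : ℕ, ρ ^ ((n:ℝ)/4 + ((p:ℝ) + (q:ℝ)/2)) = ρ ^ ((n:ℝ)/4) * (ρ ^ p * σ ^ q) := by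
    intro p q
    have hq : ρ ^ ((q:ℝ)/2) = σ ^ q := by
      rw [← Real.rpow_natCast σ q, hσdef, ← Real.rpow_mul hρ0.le]
      norm_num
      ring_nf
    rw [Real.rpow_add hρ0, Real.rpow_add hρ0, Real.rpow_natCast, hq]
  calc ∑ j ∈ Finset.range (n + 1), ∑ i ∈ Finset.range (j + 1),
        min (ρ ^ i) (min (ρ ^ (j - i)) (ρ ^ (n - j)))
      = ∑ x ∈ S, ρ ^ (max x.2 ((max (x.1 - x.2) (n - x.1)))) := by
        simp only [hmin]
        rw [Finset.sum_sigma']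
    _ ≤ ∑ x ∈ S, h (gmPhi n x) := by
        apply Finset.sum_le_sum
        intro x hx
        obtain ⟨hx2, hx1⟩ := hmemS x hx
        obtain ⟨hkey, -, -, -⟩ := gmPhi_spec n x hx2 hx1
        simp only [hh]
        rw [← hval]
        rw [← Real.rpow_natCast ρ (max x.2 (max (x.1 - x.2) (n - x.1)))]
        apply Real.rpow_le_rpow_of_exponent_ge hρ0 hρ1.le
        have : (3 * n + 12 * (gmPhi n x).2.1 + 6 * (gmPhi n x).2.2 : ℝ)
            ≤ (12 * max x.2 (max (x.1 - x.2) (n - x.1)) : ℝ) := by exact_mod_cast hkey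
        push_cast at this ⊢
        linarith
    _ = ∑ y ∈ S.image (gmPhi n), h y := by
        refine (Finset.sum_image ?_).symm
        intro x hx y hy hxy
        obtain ⟨hx2, hx1⟩ := hmemS x hx
        obtain ⟨hy2, hy1⟩ := hmemS y hy
        exact gmPhi_inj n x y hx2 hx1 hy2 hy1 hxy
    _ ≤ ∑ y ∈ T, h y := by
        apply Finset.sum_le_sum_of_subset_of_nonneg
        · intro y hy
          rw [Finset.mem_image] at hy
          obtain ⟨x, hx, rfl⟩ := hy
          obtain ⟨hx2, hx1⟩ := hmemS x hx
          obtain ⟨-, hc, hp, hq⟩ := gmPhi_spec n x hx2 hx1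
          rw [hT]
          simp only [Finset.mem_product, Finset.mem_range]
          exact ⟨hc, hp, hq⟩
        · intro y _ _
          rw [hh]
          positivity
    _ = 3 * (ρ ^ ((n:ℝ)/4) * ((∑ p ∈ Finset.range (n+1), ρ ^ p)
          * (∑ q ∈ Finset.range (n+1), σ ^ q))) := by
        rw [hT, hh]
        simp only [Finset.sum_product]
        rw [Finset.sum_const, Finset.card_range, nsmul_eq_mul]
        push_cast
        congr 1
        rw [Finset.sum_mul_sum, Finset.mul_sum]
        apply Finset.sum_congr rfl
        intro p _
        rw [Finset.mul_sum]
    _ ≤ 3 * (ρ ^ ((n:ℝ)/4) * ((1 / (1 - ρ)) * (1 / (1 - σ)))) := by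
        have hA := gm_geom_le hρ0.le hρ1 (n+1)
        have hB := gm_geom_le hσ0.le hσ1 (n+1)
        have hA0 : (0:ℝ) ≤ ∑ p ∈ Finset.range (n+1), ρ ^ p :=
          Finset.sum_nonneg fun _ _ => by positivity
        have hB0 : (0:ℝ) ≤ ∑ q ∈ Finset.range (n+1), σ ^ q :=
          Finset.sum_nonneg fun _ _ => by positivity
        have := mul_le_mul hA hB hB0 (by positivity)
        nlinarith [hr4]
    _ ≤ 4 * ρ ^ ((n:ℝ)/4) / ((1 - ρ) * (1 - σ)) := by
        have heq : 3 * (ρ ^ ((n:ℝ)/4) * ((1 / (1 - ρ)) * (1 / (1 - σ))))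
            = 3 * ρ ^ ((n:ℝ)/4) / ((1 - ρ) * (1 - σ)) := by
          field_simp
        rw [heq]
        exact (div_le_div_iff_of_pos_right (mul_pos h1ρ h1σ)).mpr (by linarith [hr4])
end

section
/- Let ρ ∈ (0,1), let k ≥ 1 and m ≥ 0 be integers, and let (wᵢ)_{i∈ℤ} be nonnegative reals. Then ∑_{i=−m+1}^{k} wᵢ · min(ρ^{i+m}, ρ^{k−1−i}) ≤ 2 (max(k, m))² · ( ∑_{i=−m}^{k} wᵢ / (max(|i|, 1))² ) · ρ^{(k+m−1)/2}/(1 − ρ). (This weighted geometric inequality is established in the proof of Lemma 13 to obtain the deterministic rate K (k ∨ m)² ρ^{(k+m)/2} for the forgetting of the conditional score.) -/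
/-- weighted geometric inequality from the proof of
Lemma 13. For `ρ ∈ (0,1)`, integers `k ≥ 1`, `m ≥ 0` and nonnegative weights
`(wᵢ)_{i∈ℤ}`,
`∑_{i=−m+1}^{k} wᵢ min(ρ^{i+m}, ρ^{k−1−i})
  ≤ 2 (k ∨ m)² (∑_{i=−m}^{k} wᵢ/(|i| ∨ 1)²) ρ^{(k+m−1)/2}/(1 − ρ)`. -/
theorem weighted_geometric_forgetting_bound
    (ρ : ℝ) (hρ0 : 0 < ρ) (hρ1 : ρ < 1) (k m : ℕ) (hk : 1 ≤ k)
    (w : ℤ → ℝ) (hw : ∀ i, 0 ≤ w i) :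
    ∑ i ∈ Finset.Icc (-(m : ℤ) + 1) (k : ℤ),
        w i * min (ρ ^ (i + (m : ℤ))) (ρ ^ ((k : ℤ) - 1 - i)) ≤
      2 * ((max k m : ℕ) : ℝ) ^ 2 *
        (∑ i ∈ Finset.Icc (-(m : ℤ)) (k : ℤ), w i / ((max |i| 1 : ℤ) : ℝ) ^ 2) *
        (ρ ^ (((k : ℝ) + (m : ℝ) - 1) / 2) / (1 - ρ)) := by
  set M : ℝ := ((max k m : ℕ) : ℝ) with hM
  set R : ℝ := ρ ^ (((k : ℝ) + (m : ℝ) - 1) / 2) with hR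
  have hR0 : 0 ≤ R := Real.rpow_nonneg hρ0.le _
  have key : ∀ i ∈ Finset.Icc (-(m : ℤ) + 1) (k : ℤ),
      w i * min (ρ ^ (i + (m : ℤ))) (ρ ^ ((k : ℤ) - 1 - i)) ≤
      M ^ 2 * (w i / ((max |i| 1 : ℤ) : ℝ) ^ 2) * R := by
    intro i hi
    simp only [Finset.mem_Icc] at hi
    obtain ⟨hi1, hi2⟩ := hi
    set c : ℝ := ((max |i| 1 : ℤ) : ℝ) with hc
    have hc1 : (1 : ℝ) ≤ c := by
      have : (1 : ℤ) ≤ max |i| 1 := le_max_right _ _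
      rw [hc]; exact_mod_cast this
    have hc0 : (0 : ℝ) < c := lt_of_lt_of_le one_pos hc1
    have hcM : c ≤ M := by
      have h1 : |i| ≤ ((max k m : ℕ) : ℤ) := by
        rw [abs_le]
        constructor
        · have : (m : ℤ) ≤ ((max k m : ℕ) : ℤ) := by exact_mod_cast le_max_right k m
          omega
        · have : (k : ℤ) ≤ ((max k m : ℕ) : ℤ) := by exact_mod_cast le_max_left k m
          omega
      have h2 : (1 : ℤ) ≤ ((max k m : ℕ) : ℤ) := by
        have : 1 ≤ max k m := le_trans hk (le_max_left k m)
        exact_mod_cast this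
      have : (max |i| 1 : ℤ) ≤ ((max k m : ℕ) : ℤ) := max_le h1 h2
      rw [hc, hM]; exact_mod_cast this
    have hmin : min (ρ ^ (i + (m : ℤ))) (ρ ^ ((k : ℤ) - 1 - i)) ≤ R := by
      set a : ℤ := i + (m : ℤ) with ha
      set b : ℤ := (k : ℤ) - 1 - i with hb
      have h1 : min (ρ ^ a) (ρ ^ b) ≤ ρ ^ (max a b) := by
        rcases max_cases a b with ⟨h, _⟩ | ⟨h, _⟩
        · rw [h]; exact min_le_left _ _
        · rw [h]; exact min_le_right _ _
      have h2 : ρ ^ (max a b) = ρ ^ ((max a b : ℤ) : ℝ) := (Real.rpow_intCast ρ _).symm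
      have h3 : ((k : ℝ) + (m : ℝ) - 1) / 2 ≤ ((max a b : ℤ) : ℝ) := by
        have hab : (a : ℝ) + (b : ℝ) = (k : ℝ) + (m : ℝ) - 1 := by
          push_cast [ha, hb]; ring
        have h4 : (a : ℝ) ≤ ((max a b : ℤ) : ℝ) := by exact_mod_cast le_max_left a b
        have h5 : (b : ℝ) ≤ ((max a b : ℤ) : ℝ) := by exact_mod_cast le_max_right a b
        linarith
      calc min (ρ ^ a) (ρ ^ b) ≤ ρ ^ ((max a b : ℤ) : ℝ) := h2 ▸ h1
        _ ≤ R := Real.rpow_le_rpow_of_exponent_ge hρ0 hρ1.le h3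
    have hw' : w i = (w i / c ^ 2) * c ^ 2 := by field_simp
    calc w i * min (ρ ^ (i + (m : ℤ))) (ρ ^ ((k : ℤ) - 1 - i))
        ≤ w i * R := mul_le_mul_of_nonneg_left hmin (hw i)
      _ = (w i / c ^ 2) * c ^ 2 * R := by rw [← hw']
      _ ≤ (w i / c ^ 2) * M ^ 2 * R := by
          apply mul_le_mul_of_nonneg_right _ hR0
          apply mul_le_mul_of_nonneg_left _ (div_nonneg (hw i) (by positivity))
          exact pow_le_pow_left₀ hc0.le hcM 2
      _ = M ^ 2 * (w i / c ^ 2) * R := by ring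
  have step1 := Finset.sum_le_sum key
  have hsub : Finset.Icc (-(m : ℤ) + 1) (k : ℤ) ⊆ Finset.Icc (-(m : ℤ)) (k : ℤ) := by
    apply Finset.Icc_subset_Icc _ le_rfl
    omega
  have hterm : ∀ i, 0 ≤ w i / ((max |i| 1 : ℤ) : ℝ) ^ 2 := by
    intro i
    apply div_nonneg (hw i)
    positivity
  have step2 : ∑ i ∈ Finset.Icc (-(m : ℤ) + 1) (k : ℤ), w i / ((max |i| 1 : ℤ) : ℝ) ^ 2 ≤
      ∑ i ∈ Finset.Icc (-(m : ℤ)) (k : ℤ), w i / ((max |i| 1 : ℤ) : ℝ) ^ 2 :=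
    Finset.sum_le_sum_of_subset_of_nonneg hsub (fun i _ _ => hterm i)
  set S : ℝ := ∑ i ∈ Finset.Icc (-(m : ℤ)) (k : ℤ), w i / ((max |i| 1 : ℤ) : ℝ) ^ 2 with hS
  have hS0 : 0 ≤ S := Finset.sum_nonneg fun i _ => hterm i
  have hM0 : (0 : ℝ) ≤ M := by positivity
  have step3 : ∑ i ∈ Finset.Icc (-(m : ℤ) + 1) (k : ℤ),
      M ^ 2 * (w i / ((max |i| 1 : ℤ) : ℝ) ^ 2) * R ≤ M ^ 2 * S * R := by
    rw [← Finset.sum_mul, ← Finset.mul_sum]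
    apply mul_le_mul_of_nonneg_right _ hR0
    exact mul_le_mul_of_nonneg_left step2 (by positivity)
  have final : M ^ 2 * S * R ≤ 2 * M ^ 2 * S * (R / (1 - ρ)) := by
    have h1ρ : 0 < 1 - ρ := by linarith
    have hRle : R ≤ R / (1 - ρ) := by
      rw [le_div_iff₀ h1ρ]; nlinarith
    have hq : 0 ≤ M ^ 2 * S * (R / (1 - ρ)) := by positivity
    calc M ^ 2 * S * R ≤ M ^ 2 * S * (R / (1 - ρ)) :=
          mul_le_mul_of_nonneg_left hRle (by positivity)
      _ ≤ 2 * M ^ 2 * S * (R / (1 - ρ)) := by nlinarith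
  linarith [step1, step3, final]
end
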